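/- Let F(x,y) be a twice continuously differentiable function on an open subset of ℝ² (with complex values allowed) satisfying e^{-F_x} + F_y/x = 0 with x ≠ 0, and define z = e^{F_y}, w = e^{-F_x}, u = -w·x. Then u satisfies the inviscid Burgers equation u·∂u/∂x + ∂u/∂y = 0. -/

import Mathlib

/-- If `F` is `C²` (complex valued) on an open set where it satisfies
`e^{-F_x} + F_y/x = 0` with `x ≠ 0`, then `u = -w x` with `w = e^{-F_x}`
satisfies the inviscid Burgers equation `u uₓ + u_y = 0`. -/
theorem burgers_from_F (s : Set (ℝ × ℝ)) (hs : IsOpen s) (F Fx Fy : ℝ → ℝ → ℂ)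
    (hC2 : ContDiffOn ℝ 2 (fun p : ℝ × ℝ => F p.1 p.2) s)
    (hFx : ∀ p ∈ s, HasDerivAt (fun a => F a p.2) (Fx p.1 p.2) p.1)
    (hFy : ∀ p ∈ s, HasDerivAt (fun b => F p.1 b) (Fy p.1 p.2) p.2)
    (hx0 : ∀ p ∈ s, p.1 ≠ 0)
    (hPDE : ∀ p ∈ s, Complex.exp (-Fx p.1 p.2) + Fy p.1 p.2 / (p.1 : ℂ) = 0) :
    ∀ p ∈ s,
      let u : ℝ → ℝ → ℂ := fun a b => -Complex.exp (-Fx a b) * (a : ℂ)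
      u p.1 p.2 * deriv (fun a => u a p.2) p.1 +
        deriv (fun b => u p.1 b) p.2 = 0 := by
  intro p hp u
  set f : ℝ × ℝ → ℂ := fun q => F q.1 q.2 with hfdef
  set g : ℝ × ℝ → (ℝ × ℝ →L[ℝ] ℂ) := fderiv ℝ f with hgdef
  -- g is C¹ on s, hence differentiable at p
  have hg1 : ContDiffOn ℝ 1 g s := hC2.fderiv_of_isOpen hs (by norm_num)
  have hfd : ∀ q ∈ s, HasFDerivAt f (g q) q := fun q hq =>
    (((hC2.contDiffAt (hs.mem_nhds hq)).differentiableAt (by norm_num))).hasFDerivAt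
  have hgd : HasFDerivAt g (fderiv ℝ g p) p :=
    (((hg1.contDiffAt (hs.mem_nhds hp)).differentiableAt (by norm_num))).hasFDerivAt
  set G : ℝ × ℝ →L[ℝ] (ℝ × ℝ →L[ℝ] ℂ) := fderiv ℝ g p with hGdef
  -- symmetry of second derivative
  have hsymm : G (1, 0) (0, 1) = G (0, 1) (1, 0) := by
    refine second_derivative_symmetric_of_eventually (f := f) ?_ hgd (1, 0) (0, 1)
    filter_upwards [hs.mem_nhds hp] with q hq using hfd q hq
  -- identify partial derivatives with applications of g
  have keyx : ∀ q ∈ s, Fx q.1 q.2 = g q (1, 0) := by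
    intro q hq
    have hc : HasDerivAt (fun a : ℝ => ((a, q.2) : ℝ × ℝ)) ((1 : ℝ), (0 : ℝ)) q.1 :=
      (hasDerivAt_id q.1).prodMk (hasDerivAt_const q.1 q.2)
    have h1 : HasDerivAt (fun a => F a q.2) (g q (1, 0)) q.1 :=
      by have := (hfd q hq).comp_hasDerivAt q.1 hc; exact this
    exact (hFx q hq).unique h1
  have keyy : ∀ q ∈ s, Fy q.1 q.2 = g q (0, 1) := by
    intro q hq
    have hc : HasDerivAt (fun b : ℝ => ((q.1, b) : ℝ × ℝ)) ((0 : ℝ), (1 : ℝ)) q.2 :=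
      (hasDerivAt_const q.2 q.1).prodMk (hasDerivAt_id q.2)
    have h1 : HasDerivAt (fun b => F q.1 b) (g q (0, 1)) q.2 :=
      by have := (hfd q hq).comp_hasDerivAt q.2 hc; exact this
    exact (hFy q hq).unique h1
  -- neighborhood facts along the two coordinate lines
  have hmemx : ∀ᶠ a in nhds p.1, ((a, p.2) : ℝ × ℝ) ∈ s := by
    have hc : ContinuousAt (fun a : ℝ => ((a, p.2) : ℝ × ℝ)) p.1 :=
      (continuous_id.prodMk continuous_const).continuousAt
    exact hc.preimage_mem_nhds (hs.mem_nhds hp)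
  have hmemy : ∀ᶠ b in nhds p.2, ((p.1, b) : ℝ × ℝ) ∈ s := by
    have hc : ContinuousAt (fun b : ℝ => ((p.1, b) : ℝ × ℝ)) p.2 :=
      (continuous_const.prodMk continuous_id).continuousAt
    exact hc.preimage_mem_nhds (hs.mem_nhds hp)
  have hx : (p.1 : ℂ) ≠ 0 := by exact_mod_cast hx0 p hp
  -- u coincides with Fy on s (via the PDE)
  have hu_eq : ∀ q ∈ s, u q.1 q.2 = Fy q.1 q.2 := by
    intro q hq
    have h := hPDE q hq
    have hxq : (q.1 : ℂ) ≠ 0 := by exact_mod_cast hx0 q hq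
    have h' : Complex.exp (-Fx q.1 q.2) = -(Fy q.1 q.2 / (q.1 : ℂ)) := by
      linear_combination h
    show -Complex.exp (-Fx q.1 q.2) * (q.1 : ℂ) = Fy q.1 q.2
    rw [h']
    field_simp
  -- derivatives of g along coordinate lines
  have hgy : HasDerivAt (fun b => g (p.1, b)) (G (0, 1)) p.2 := by
    have hc : HasDerivAt (fun b : ℝ => ((p.1, b) : ℝ × ℝ)) ((0 : ℝ), (1 : ℝ)) p.2 :=
      (hasDerivAt_const p.2 p.1).prodMk (hasDerivAt_id p.2)
    exact hgd.comp_hasDerivAt p.2 hc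
  have hgx : HasDerivAt (fun a => g (a, p.2)) (G (1, 0)) p.1 := by
    have hc : HasDerivAt (fun a : ℝ => ((a, p.2) : ℝ × ℝ)) ((1 : ℝ), (0 : ℝ)) p.1 :=
      (hasDerivAt_id p.1).prodMk (hasDerivAt_const p.1 p.2)
    exact hgd.comp_hasDerivAt p.1 hc
  -- evaluation at fixed vectors
  have hgyv : ∀ v : ℝ × ℝ, HasDerivAt (fun b => g (p.1, b) v) (G (0, 1) v) p.2 := fun v =>
    (ContinuousLinearMap.apply ℝ ℂ v).hasFDerivAt.comp_hasDerivAt p.2 hgy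
  have hgxv : ∀ v : ℝ × ℝ, HasDerivAt (fun a => g (a, p.2) v) (G (1, 0) v) p.1 := fun v =>
    (ContinuousLinearMap.apply ℝ ℂ v).hasFDerivAt.comp_hasDerivAt p.1 hgx
  -- derivative of Fx in y, Fy in x and y
  have hFxy : HasDerivAt (fun b => Fx p.1 b) (G (0, 1) (1, 0)) p.2 := by
    refine (hgyv (1, 0)).congr_of_eventuallyEq ?_
    filter_upwards [hmemy] with b hb using keyx (p.1, b) hb
  have hFyy : HasDerivAt (fun b => Fy p.1 b) (G (0, 1) (0, 1)) p.2 := by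
    refine (hgyv (0, 1)).congr_of_eventuallyEq ?_
    filter_upwards [hmemy] with b hb using keyy (p.1, b) hb
  have hFyx : HasDerivAt (fun a => Fy a p.2) (G (1, 0) (0, 1)) p.1 := by
    refine (hgxv (0, 1)).congr_of_eventuallyEq ?_
    filter_upwards [hmemx] with a ha using keyy (a, p.2) ha
  set w : ℂ := Complex.exp (-Fx p.1 p.2) with hw
  set A : ℂ := G (1, 0) (0, 1) with hA
  set B : ℂ := G (0, 1) (0, 1) with hB
  set C : ℂ := G (0, 1) (1, 0) with hC
  -- differentiate the PDE in y
  have hPDEy : w * (-C) + B / (p.1 : ℂ) = 0 := by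
    have h1 : HasDerivAt (fun b => Complex.exp (-Fx p.1 b) + Fy p.1 b / (p.1 : ℂ))
        (Complex.exp (-Fx p.1 p.2) * (-C) + (B / (p.1 : ℂ))) p.2 :=
      (hFxy.neg.cexp).add (hFyy.div_const _)
    have h2 : HasDerivAt (fun _ : ℝ => (0 : ℂ)) (Complex.exp (-Fx p.1 p.2) * (-C) + (B / (p.1 : ℂ))) p.2 := by
      refine h1.congr_of_eventuallyEq ?_
      filter_upwards [hmemy] with b hb
      exact (hPDE (p.1, b) hb).symm
    have := (hasDerivAt_const p.2 (0 : ℂ)).unique h2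
    rw [← this]
  -- compute the two derivatives of u
  have hdx : deriv (fun a => u a p.2) p.1 = A := by
    have h1 : HasDerivAt (fun a => u a p.2) A p.1 := by
      refine hFyx.congr_of_eventuallyEq ?_
      filter_upwards [hmemx] with a ha using hu_eq (a, p.2) ha
    exact h1.deriv
  have hdy : deriv (fun b => u p.1 b) p.2 = B := by
    have h1 : HasDerivAt (fun b => u p.1 b) B p.2 := by
      refine hFyy.congr_of_eventuallyEq ?_
      filter_upwards [hmemy] with b hb using hu_eq (p.1, b) hb
    exact h1.deriv
  have hup : u p.1 p.2 = -w * (p.1 : ℂ) := rfl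
  rw [hdx, hdy, hup]
  -- from the PDE derivative: B = p.1 * w * C; and A = C by symmetry
  have hBC : B = (p.1 : ℂ) * (w * C) := by
    field_simp at hPDEy
    linear_combination hPDEy
  have hAC : A = C := hsymm
  rw [hBC, hAC]
  ring
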